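/- Let n_1, n_2, n_3 ≥ 2 be integers, and let L be the graph Laplacian of the 3-partite graph G_{n_1,n_2,n_3}. Then the cokernel ℤ^{n_1+n_2+n_3}/im L is isomorphic as an abelian group to ℤ ⊕ (ℤ/n_2ℤ)^{⊕(n_1+n_3−2)} ⊕ (ℤ/(n_1+n_3)ℤ)^{⊕(n_2−2)} ⊕ ℤ/(n_2(n_1+n_3))ℤ. -/

import Mathlib

open Matrix

/-- The `k`-partite graph `G_{n 0, …, n (k-1)}` (parts indexed `0,…,k-1`, part `i` of size `n i`):
two vertices are adjacent iff they lie in consecutive parts. -/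
def kpartiteGraph (k : ℕ) (n : ℕ → ℕ) : SimpleGraph (Σ i : Fin k, Fin (n i.val)) where
  Adj v w := v.1.val + 1 = w.1.val ∨ w.1.val + 1 = v.1.val
  symm := ⟨fun v w h => Or.symm h⟩
  loopless := ⟨fun v h => by rcases h with h | h <;> omega⟩

instance (k : ℕ) (n : ℕ → ℕ) : DecidableRel (kpartiteGraph k n).Adj :=
  fun v w => inferInstanceAs (Decidable (v.1.val + 1 = w.1.val ∨ w.1.val + 1 = v.1.val))

/-- The cokernel `ℤ^m / im M` of a square integer matrix, viewed as a `ℤ`-linear map. -/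
abbrev Matrix.cokernel {m : Type*} [Fintype m] (M : Matrix m m ℤ) : Type _ :=
  (m → ℤ) ⧸ LinearMap.range M.mulVecLin

namespace TP
variable (n₁ n₂ n₃ : ℕ)

abbrev nn : ℕ → ℕ := fun i =>
  Nat.rec (motive := fun _ => ℕ) n₁ (fun j _ => Nat.rec (motive := fun _ => ℕ) n₂
    (fun k _ => Nat.rec (motive := fun _ => ℕ) n₃ (fun _ _ => 0) k) j) i
abbrev V := Σ i : Fin 3, Fin (nn n₁ n₂ n₃ i.val)
abbrev G := kpartiteGraph 3 (nn n₁ n₂ n₃)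

abbrev vA (t : Fin n₁) : V n₁ n₂ n₃ := ⟨⟨0, by omega⟩, t⟩
abbrev vB (t : Fin n₂) : V n₁ n₂ n₃ := ⟨⟨1, by omega⟩, t⟩
abbrev vC (t : Fin n₃) : V n₁ n₂ n₃ := ⟨⟨2, by omega⟩, t⟩

variable {n₁ n₂ n₃}

def eA0 : V n₁ n₂ n₃ → ℤ := fun w => if w.1.val = 0 ∧ w.2.val = 0 then 1 else 0
def eB0 : V n₁ n₂ n₃ → ℤ := fun w => if w.1.val = 1 ∧ w.2.val = 0 then 1 else 0
def indB : V n₁ n₂ n₃ → ℤ := fun w => if w.1.val = 1 then 1 else 0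
def indAC : V n₁ n₂ n₃ → ℤ := fun w => if w.1.val = 1 then 0 else 1
def e (v : V n₁ n₂ n₃) : V n₁ n₂ n₃ → ℤ := fun w => if w = v then 1 else 0

def FB (x : V n₁ n₂ n₃ → ℤ) : ℤ := ∑ t : Fin n₂, x (vB n₁ n₂ n₃ t)
def EA (x : V n₁ n₂ n₃ → ℤ) : ℤ :=
  (∑ t : Fin n₁, x (vA n₁ n₂ n₃ t)) + ∑ t : Fin n₃, x (vC n₁ n₂ n₃ t)

lemma sum_ite_fin {M : Type*} [AddCommMonoid M] (m k : ℕ) (hk : k < m) (c : Fin m → M) :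
    (∑ t : Fin m, if t.val = k then c t else 0) = c ⟨k, hk⟩ := by
  rw [Finset.sum_eq_single_of_mem (⟨k, hk⟩ : Fin m) (Finset.mem_univ _)]
  · rw [if_pos rfl]
  · intro b _ hb
    exact if_neg fun hv => hb (Fin.ext hv)

@[simp] lemma FB_add (x y : V n₁ n₂ n₃ → ℤ) : FB (x + y) = FB x + FB y := by
  simp [FB, Finset.sum_add_distrib]
@[simp] lemma FB_sub (x y : V n₁ n₂ n₃ → ℤ) : FB (x - y) = FB x - FB y := by
  simp [FB, Finset.sum_sub_distrib]
@[simp] lemma FB_smul (z : ℤ) (x : V n₁ n₂ n₃ → ℤ) : FB (z • x) = z * FB x := by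
  simp [FB, Finset.mul_sum]
@[simp] lemma EA_add (x y : V n₁ n₂ n₃ → ℤ) : EA (x + y) = EA x + EA y := by
  simp [EA, Finset.sum_add_distrib]; ring
@[simp] lemma EA_sub (x y : V n₁ n₂ n₃ → ℤ) : EA (x - y) = EA x - EA y := by
  simp [EA, Finset.sum_sub_distrib]; ring
@[simp] lemma EA_smul (z : ℤ) (x : V n₁ n₂ n₃ → ℤ) : EA (z • x) = z * EA x := by
  simp [EA, ← Finset.mul_sum]; ring

@[simp] lemma FB_eA0 : FB (eA0 : V n₁ n₂ n₃ → ℤ) = 0 := by simp [FB, eA0, vB]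
@[simp] lemma EA_eA0 (h : 0 < n₁) : EA (eA0 : V n₁ n₂ n₃ → ℤ) = 1 := by
  have : (∑ t : Fin n₁, if t.val = 0 then (1:ℤ) else 0) = 1 := by
    rw [sum_ite_fin n₁ 0 h]
  simp [EA, eA0, vA, vC, this]
@[simp] lemma FB_eB0 (h : 0 < n₂) : FB (eB0 : V n₁ n₂ n₃ → ℤ) = 1 := by
  have : (∑ t : Fin n₂, if t.val = 0 then (1:ℤ) else 0) = 1 := by
    rw [sum_ite_fin n₂ 0 h]
  simp [FB, eB0, vB, this]
@[simp] lemma EA_eB0 : EA (eB0 : V n₁ n₂ n₃ → ℤ) = 0 := by simp [EA, eB0, vA, vC]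
@[simp] lemma FB_indB : FB (indB : V n₁ n₂ n₃ → ℤ) = n₂ := by simp [FB, indB, vB]
@[simp] lemma EA_indB : EA (indB : V n₁ n₂ n₃ → ℤ) = 0 := by simp [EA, indB, vA, vC]
@[simp] lemma FB_indAC : FB (indAC : V n₁ n₂ n₃ → ℤ) = 0 := by simp [FB, indAC, vB]
@[simp] lemma EA_indAC : EA (indAC : V n₁ n₂ n₃ → ℤ) = (n₁ : ℤ) + n₃ := by
  simp [EA, indAC, vA, vC]
@[simp] lemma FB_one : FB (fun _ => (1:ℤ) : V n₁ n₂ n₃ → ℤ) = n₂ := by simp [FB]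
@[simp] lemma EA_one : EA (fun _ => (1:ℤ) : V n₁ n₂ n₃ → ℤ) = (n₁ : ℤ) + n₃ := by simp [EA]

@[simp] lemma FB_eA (i : Fin 3) (hi : i.val ≠ 1) (t : Fin (nn n₁ n₂ n₃ i.val)) :
    FB (e (⟨i, t⟩ : V n₁ n₂ n₃)) = 0 := by
  simp only [FB, e, vB]
  rw [Finset.sum_eq_zero]
  intro b _
  refine if_neg ?_
  intro h
  exact hi (congrArg (fun v : V n₁ n₂ n₃ => v.1.val) h).symm
@[simp] lemma EA_eB (t : Fin (nn n₁ n₂ n₃ 1)) :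
    EA (e (⟨⟨1, by omega⟩, t⟩ : V n₁ n₂ n₃)) = 0 := by
  simp only [EA, e, vA, vC]
  rw [Finset.sum_eq_zero, Finset.sum_eq_zero, add_zero]
  all_goals
    intro b _
    refine if_neg ?_
    intro h
    exact absurd (congrArg (fun v : V n₁ n₂ n₃ => v.1.val) h) (by simp)
@[simp] lemma FB_eB (t : Fin (nn n₁ n₂ n₃ 1)) :
    FB (e (⟨⟨1, by omega⟩, t⟩ : V n₁ n₂ n₃)) = 1 := by
  simp only [FB, e, vB]
  have : ∀ s : Fin n₂, ((⟨⟨1, by omega⟩, s⟩ : V n₁ n₂ n₃) = ⟨⟨1, by omega⟩, t⟩) ↔ s.val = t.val := by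
    intro s
    constructor
    · intro h'
      exact congrArg (fun v : V n₁ n₂ n₃ => v.2.val) h'
    · intro h'
      congr 1
      exact Fin.ext h'
  simp_rw [this]
  exact sum_ite_fin n₂ t.val (by exact t.isLt) _

end TP

namespace TP
variable {n₁ n₂ n₃ : ℕ}

@[simp] lemma FB_eA' (h : (0:ℕ) < 3) (t : Fin (nn n₁ n₂ n₃ 0)) :
    FB (e (⟨⟨0, h⟩, t⟩ : V n₁ n₂ n₃)) = 0 := FB_eA _ (by simp) _
@[simp] lemma FB_eC' (h : (2:ℕ) < 3) (t : Fin (nn n₁ n₂ n₃ 2)) :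
    FB (e (⟨⟨2, h⟩, t⟩ : V n₁ n₂ n₃)) = 0 := FB_eA _ (by simp) _

@[simp] lemma EA_eA (t : Fin (nn n₁ n₂ n₃ 0)) :
    EA (e (⟨⟨0, by omega⟩, t⟩ : V n₁ n₂ n₃)) = 1 := by
  simp only [EA, e, vA, vC]
  have h2 : (∑ s : Fin n₃, if (⟨⟨2, by omega⟩, s⟩ : V n₁ n₂ n₃) = ⟨⟨0, by omega⟩, t⟩ then (1:ℤ) else 0) = 0 := by
    rw [Finset.sum_eq_zero]
    intro b _
    rw [if_neg]
    intro h
    exact absurd (congrArg (fun v : V n₁ n₂ n₃ => v.1.val) h) (by simp)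
  have h1 : ∀ s : Fin n₁,
      ((⟨⟨0, by omega⟩, s⟩ : V n₁ n₂ n₃) = ⟨⟨0, by omega⟩, t⟩) ↔ s.val = t.val := by
    intro s
    constructor
    · intro h'
      exact congrArg (fun v : V n₁ n₂ n₃ => v.2.val) h'
    · intro h'
      congr 1
      exact Fin.ext h'
  simp_rw [h1, h2]
  rw [sum_ite_fin n₁ t.val t.isLt, add_zero]

@[simp] lemma EA_eC (t : Fin (nn n₁ n₂ n₃ 2)) :
    EA (e (⟨⟨2, by omega⟩, t⟩ : V n₁ n₂ n₃)) = 1 := by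
  simp only [EA, e, vA, vC]
  have h2 : (∑ s : Fin n₁, if (⟨⟨0, by omega⟩, s⟩ : V n₁ n₂ n₃) = ⟨⟨2, by omega⟩, t⟩ then (1:ℤ) else 0) = 0 := by
    rw [Finset.sum_eq_zero]
    intro b _
    rw [if_neg]
    intro h
    exact absurd (congrArg (fun v : V n₁ n₂ n₃ => v.1.val) h) (by simp)
  have h1 : ∀ s : Fin n₃,
      ((⟨⟨2, by omega⟩, s⟩ : V n₁ n₂ n₃) = ⟨⟨2, by omega⟩, t⟩) ↔ s.val = t.val := by
    intro s
    constructor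
    · intro h'
      exact congrArg (fun v : V n₁ n₂ n₃ => v.2.val) h'
    · intro h'
      congr 1
      exact Fin.ext h'
  simp_rw [h1, h2]
  rw [sum_ite_fin n₃ t.val t.isLt, zero_add]

end TP

namespace TP
variable {n₁ n₂ n₃ : ℕ}

theorem sum_V (x : V n₁ n₂ n₃ → ℤ) :
    ∑ v : V n₁ n₂ n₃, x v =
      (∑ t : Fin n₁, x (vA n₁ n₂ n₃ t)) + (∑ t : Fin n₂, x (vB n₁ n₂ n₃ t))
        + ∑ t : Fin n₃, x (vC n₁ n₂ n₃ t) := by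
  rw [← Finset.univ_sigma_univ, Finset.sum_sigma, Fin.sum_univ_three]
  rfl

theorem adj_sum (c : V n₁ n₂ n₃ → ℤ) (w : V n₁ n₂ n₃) :
    (∑ u : V n₁ n₂ n₃, if (G n₁ n₂ n₃).Adj w u then c u else 0) =
      if w.1.val = 1 then EA c else FB c := by
  obtain ⟨⟨i, hi⟩, s⟩ := w
  rw [sum_V]
  interval_cases i <;>
    simp [kpartiteGraph, vA, vB, vC, EA, FB]

theorem lap_mulVec (x : V n₁ n₂ n₃ → ℤ) (w : V n₁ n₂ n₃) :
    ((G n₁ n₂ n₃).lapMatrix ℤ *ᵥ x) w =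
      if w.1.val = 1 then ((n₁ : ℤ) + n₃) * x w - EA x else (n₂ : ℤ) * x w - FB x := by
  rw [SimpleGraph.lapMatrix_mulVec_apply]
  have hdeg : ((G n₁ n₂ n₃).degree w : ℤ) =
      ∑ u : V n₁ n₂ n₃, if (G n₁ n₂ n₃).Adj w u then 1 else 0 := by
    rw [← SimpleGraph.card_neighborFinset_eq_degree, SimpleGraph.neighborFinset_eq_filter,
      Finset.card_filter]
    push_cast
    rfl
  have hnb : ∑ u ∈ (G n₁ n₂ n₃).neighborFinset w, x u =
      ∑ u : V n₁ n₂ n₃, if (G n₁ n₂ n₃).Adj w u then x u else 0 := by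
    rw [SimpleGraph.neighborFinset_eq_filter, Finset.sum_filter]
  rw [hdeg, hnb, Finset.sum_mul, adj_sum]
  simp only [ite_mul, one_mul, zero_mul, adj_sum]
  obtain ⟨⟨i, hi⟩, s⟩ := w
  by_cases h : i = 1 <;>
    simp [h, EA, FB, Finset.sum_const, Finset.card_univ, mul_comm] <;> ring

variable (n₁ n₂ n₃) in
def S : V n₁ n₂ n₃ → V n₁ n₂ n₃ → ℤ
  | ⟨⟨0, _⟩, ⟨0, _⟩⟩ => eA0
  | ⟨⟨0, _⟩, ⟨1, _⟩⟩ => fun _ => 1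
  | v@⟨⟨0, _⟩, ⟨_+2, _⟩⟩ => e v - eA0
  | ⟨⟨1, _⟩, ⟨0, _⟩⟩ => eB0
  | ⟨⟨1, _⟩, ⟨1, _⟩⟩ => ((n₁:ℤ)+n₃) • eA0 - (n₂:ℤ) • eB0 + indB
  | v@⟨⟨1, _⟩, ⟨_+2, _⟩⟩ => e v - eB0
  | v@⟨⟨2, _⟩, _⟩ => e v - eA0
  | ⟨⟨_+3, hi⟩, _⟩ => absurd hi (by omega)

variable (n₁ n₂ n₃) in
def T : V n₁ n₂ n₃ → V n₁ n₂ n₃ → ℤ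
  | ⟨⟨0, _⟩, ⟨0, _⟩⟩ => (n₂:ℤ) • eA0 - indB
  | ⟨⟨0, _⟩, ⟨1, _⟩⟩ => eB0
  | v@⟨⟨0, _⟩, ⟨_+2, _⟩⟩ => e v - eA0
  | ⟨⟨1, _⟩, ⟨0, _⟩⟩ => ((n₁:ℤ)+n₃) • eB0 - indAC
  | ⟨⟨1, _⟩, ⟨1, _⟩⟩ => eA0 - eB0
  | v@⟨⟨1, _⟩, ⟨_+2, _⟩⟩ => e v - eB0
  | v@⟨⟨2, _⟩, _⟩ => e v - eA0
  | ⟨⟨_+3, hi⟩, _⟩ => absurd hi (by omega)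

variable (n₁ n₂ n₃) in
def dn : V n₁ n₂ n₃ → ℕ
  | ⟨⟨0, _⟩, ⟨0, _⟩⟩ => 1
  | ⟨⟨0, _⟩, ⟨1, _⟩⟩ => 0
  | ⟨⟨0, _⟩, ⟨_+2, _⟩⟩ => n₂
  | ⟨⟨1, _⟩, ⟨0, _⟩⟩ => 1
  | ⟨⟨1, _⟩, ⟨1, _⟩⟩ => n₂ * (n₁ + n₃)
  | ⟨⟨1, _⟩, ⟨_+2, _⟩⟩ => n₁ + n₃
  | ⟨⟨2, _⟩, _⟩ => n₂
  | ⟨⟨_+3, hi⟩, _⟩ => absurd hi (by omega)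

lemma mk_eq_mk {j i : ℕ} (hj : j < 3) (hi : i < 3) (s : Fin (nn n₁ n₂ n₃ j))
    (t : Fin (nn n₁ n₂ n₃ i)) :
    ((⟨⟨j, hj⟩, s⟩ : V n₁ n₂ n₃) = ⟨⟨i, hi⟩, t⟩) ↔ j = i ∧ s.val = t.val := by
  constructor
  · intro h
    exact ⟨congrArg (fun v : V n₁ n₂ n₃ => v.1.val) h,
      congrArg (fun v : V n₁ n₂ n₃ => v.2.val) h⟩
  · rintro ⟨rfl, h2⟩
    rw [Fin.ext h2]

theorem key (h₁ : 2 ≤ n₁) (h₂ : 2 ≤ n₂) (h₃ : 2 ≤ n₃) (v : V n₁ n₂ n₃) :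
    (G n₁ n₂ n₃).lapMatrix ℤ *ᵥ S n₁ n₂ n₃ v = (dn n₁ n₂ n₃ v : ℤ) • T n₁ n₂ n₃ v := by
  have fb0 : FB (eB0 : V n₁ n₂ n₃ → ℤ) = 1 := FB_eB0 (by omega)
  have ea0 : EA (eA0 : V n₁ n₂ n₃ → ℤ) = 1 := EA_eA0 (by omega)
  funext w
  rw [lap_mulVec]
  obtain ⟨⟨i, hi⟩, ⟨tv, ht⟩⟩ := v
  interval_cases i <;> rcases tv with _ | _ | tv <;>
    simp only [S, T, dn, Pi.smul_apply, smul_eq_mul, Pi.sub_apply, Pi.add_apply,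
      FB_add, FB_sub, FB_smul, EA_add, EA_sub, EA_smul,
      FB_eA0, fb0, FB_indB, FB_indAC, FB_one,
      ea0, EA_eB0, EA_indB, EA_indAC, EA_one,
      FB_eA', FB_eC', EA_eA, EA_eB, EA_eC, FB_eB] <;>
  · obtain ⟨⟨j, hj⟩, ⟨sv, hs⟩⟩ := w
    simp only [e, eA0, eB0, indB, indAC, mk_eq_mk]
    push_cast
    interval_cases j <;> split_ifs <;>
      first
        | ring1
        | omega
        | tauto
        | (exfalso; omega)
        | (push_cast; ring1)
end TP

namespace TP
variable {n₁ n₂ n₃ : ℕ}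

lemma sum_ite_zero (m k : ℕ) (hk : k < m) (c : Fin m → ℤ) :
    (∑ t : Fin m, if t.val = k then 0 else c t) = (∑ t, c t) - c ⟨k, hk⟩ := by
  have h : ∀ t : Fin m, (if t.val = k then (0:ℤ) else c t)
      = c t - (if t.val = k then c t else 0) := by
    intro t; split <;> ring
  simp_rw [h]
  rw [Finset.sum_sub_distrib, sum_ite_fin m k hk]

lemma eA0_eq (h : (0:ℕ) < 3) (hn : 0 < nn n₁ n₂ n₃ 0) :
    (eA0 : V n₁ n₂ n₃ → ℤ) = e ⟨⟨0, h⟩, ⟨0, hn⟩⟩ := by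
  funext w
  obtain ⟨⟨j, hj⟩, ⟨sv, hs⟩⟩ := w
  simp only [eA0, e, mk_eq_mk]

lemma eB0_eq (h : (1:ℕ) < 3) (hn : 0 < nn n₁ n₂ n₃ 1) :
    (eB0 : V n₁ n₂ n₃ → ℤ) = e ⟨⟨1, h⟩, ⟨0, hn⟩⟩ := by
  funext w
  obtain ⟨⟨j, hj⟩, ⟨sv, hs⟩⟩ := w
  simp only [eB0, e, mk_eq_mk]

lemma sum_ite_fin' {M : Type*} [AddCommMonoid M] (m k : ℕ) (hk : k < m) (c : Fin m → M) :
    (∑ t : Fin m, if k = t.val then c t else 0) = c ⟨k, hk⟩ := by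
  rw [Finset.sum_eq_single_of_mem (⟨k, hk⟩ : Fin m) (Finset.mem_univ _)]
  · rw [if_pos rfl]
  · intro b _ hb
    exact if_neg fun hv => hb (Fin.ext hv.symm)

lemma indB_eq_sum : (∑ t : Fin n₂, e (vB n₁ n₂ n₃ t)) = indB := by
  funext w
  rw [Finset.sum_apply]
  obtain ⟨⟨j, hj⟩, ⟨sv, hs⟩⟩ := w
  simp only [e, vB, indB, mk_eq_mk, ite_and]
  by_cases hj1 : j = 1
  · have hs' : sv < n₂ := by subst hj1; exact hs
    simp only [hj1, if_pos rfl]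
    exact sum_ite_fin' n₂ sv hs' _
  · simp [hj1]

lemma indAC_eq_sum :
    ((∑ t : Fin n₁, e (vA n₁ n₂ n₃ t)) + ∑ t : Fin n₃, e (vC n₁ n₂ n₃ t)) = indAC := by
  funext w
  rw [Pi.add_apply, Finset.sum_apply, Finset.sum_apply]
  obtain ⟨⟨j, hj⟩, ⟨sv, hs⟩⟩ := w
  simp only [e, vA, vC, indAC, mk_eq_mk, ite_and]
  interval_cases j
  · have hs' : sv < n₁ := hs
    norm_num
    rw [Finset.card_filter]
    exact sum_ite_fin' n₁ sv hs' _
  · norm_num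
  · have hs' : sv < n₃ := hs
    norm_num
    rw [Finset.card_filter]
    exact sum_ite_fin' n₃ sv hs' _

lemma one_eq_sum : (∑ v : V n₁ n₂ n₃, e v) = fun _ => (1:ℤ) := by
  funext w
  rw [Finset.sum_apply]
  simp only [e]
  rw [Finset.sum_ite_eq Finset.univ w (fun _ => (1:ℤ))]
  simp

end TP

namespace TP
variable {n₁ n₂ n₃ : ℕ}

lemma eb1_eq (c : 1 < nn n₁ n₂ n₃ 1) :
    indB - (∑ t : Fin n₂, if t.val = 1 then (0 : V n₁ n₂ n₃ → ℤ) else e (vB n₁ n₂ n₃ t))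
      = e (vB n₁ n₂ n₃ ⟨1, c⟩) := by
  rw [← indB_eq_sum, ← Finset.sum_sub_distrib]
  rw [Finset.sum_congr rfl (fun t _ =>
    show e (vB n₁ n₂ n₃ t) - (if t.val = 1 then 0 else e (vB n₁ n₂ n₃ t))
        = if t.val = 1 then e (vB n₁ n₂ n₃ t) else 0 from by split <;> simp)]
  exact sum_ite_fin n₂ 1 c _

lemma ea1_eq (c : 1 < nn n₁ n₂ n₃ 0) :
    (fun _ => (1:ℤ)) - (∑ v : V n₁ n₂ n₃,
        if v = (⟨⟨0, by omega⟩, ⟨1, c⟩⟩ : V n₁ n₂ n₃) then 0 else e v)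
      = e ⟨⟨0, by omega⟩, ⟨1, c⟩⟩ := by
  rw [← one_eq_sum, ← Finset.sum_sub_distrib]
  rw [Finset.sum_congr rfl (fun v _ =>
    show e v - (if v = (⟨⟨0, by omega⟩, ⟨1, c⟩⟩ : V n₁ n₂ n₃) then 0 else e v)
        = if v = (⟨⟨0, by omega⟩, ⟨1, c⟩⟩ : V n₁ n₂ n₃) then e v else 0 from by split <;> simp)]
  rw [Finset.sum_ite_eq' Finset.univ (⟨⟨0, by omega⟩, ⟨1, c⟩⟩ : V n₁ n₂ n₃) e]
  simp

lemma ea1_eq' (c : 1 < nn n₁ n₂ n₃ 0) :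
    indAC - (∑ t : Fin n₁, if t.val = 1 then (0 : V n₁ n₂ n₃ → ℤ) else e (vA n₁ n₂ n₃ t))
      - (∑ t : Fin n₃, e (vC n₁ n₂ n₃ t)) = e (vA n₁ n₂ n₃ ⟨1, c⟩) := by
  have h1 : (∑ t : Fin n₁, e (vA n₁ n₂ n₃ t))
      - (∑ t : Fin n₁, if t.val = 1 then (0 : V n₁ n₂ n₃ → ℤ) else e (vA n₁ n₂ n₃ t))
      = e (vA n₁ n₂ n₃ ⟨1, c⟩) := by
    rw [← Finset.sum_sub_distrib]
    rw [Finset.sum_congr rfl (fun t _ =>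
      show e (vA n₁ n₂ n₃ t) - (if t.val = 1 then 0 else e (vA n₁ n₂ n₃ t))
          = if t.val = 1 then e (vA n₁ n₂ n₃ t) else 0 from by split <;> simp)]
    exact sum_ite_fin n₁ 1 c _
  rw [← indAC_eq_sum, ← h1]
  abel

/-- every `x` is an integer combination of the `e v` -/
lemma mem_of_e (p : Submodule ℤ (V n₁ n₂ n₃ → ℤ)) (hAll : ∀ v, e v ∈ p) (x : V n₁ n₂ n₃ → ℤ) :
    x ∈ p := by
  have hx : x = ∑ v : V n₁ n₂ n₃, x v • e v := by
    funext w
    rw [Finset.sum_apply]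
    simp only [Pi.smul_apply, smul_eq_mul, e, mul_ite, mul_one, mul_zero]
    rw [Finset.sum_ite_eq Finset.univ w x]
    simp
  rw [hx]
  exact Submodule.sum_mem _ fun v _ => Submodule.smul_mem _ _ (hAll v)

lemma eBall (p : Submodule ℤ (V n₁ n₂ n₃ → ℤ)) (h₂ : 2 ≤ n₂)
    (hB0 : (eB0 : V n₁ n₂ n₃ → ℤ) ∈ p)
    (hB2 : ∀ (tv : ℕ) (ht : tv + 2 < nn n₁ n₂ n₃ 1),
      e (⟨⟨1, by omega⟩, ⟨tv + 2, ht⟩⟩ : V n₁ n₂ n₃) ∈ p)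
    (hIndB : (indB : V n₁ n₂ n₃ → ℤ) ∈ p) :
    ∀ t : Fin (nn n₁ n₂ n₃ 1), e (⟨⟨1, by omega⟩, t⟩ : V n₁ n₂ n₃) ∈ p := by
  intro t
  obtain ⟨tv, ht⟩ := t
  match tv, ht with
  | 0, ht => exact (eB0_eq (by omega) ht) ▸ hB0
  | 1, ht =>
    have hsum : (∑ t : Fin n₂, if t.val = 1 then (0 : V n₁ n₂ n₃ → ℤ)
        else e (vB n₁ n₂ n₃ t)) ∈ p := by
      refine Submodule.sum_mem _ fun t _ => ?_
      obtain ⟨sv, hsv⟩ := t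
      match sv, hsv with
      | 0, hsv => simpa using (eB0_eq (by omega) hsv) ▸ hB0
      | 1, hsv => simp
      | sv + 2, hsv => rw [if_neg (by simp)]; exact hB2 sv hsv
    have h := Submodule.sub_mem p hIndB hsum
    rwa [eb1_eq (by omega : 1 < n₂)] at h
  | tv + 2, ht => exact hB2 tv ht

lemma eAll (p : Submodule ℤ (V n₁ n₂ n₃ → ℤ)) (h₁ : 2 ≤ n₁) (h₂ : 2 ≤ n₂)
    (hA0 : (eA0 : V n₁ n₂ n₃ → ℤ) ∈ p) (hB0 : (eB0 : V n₁ n₂ n₃ → ℤ) ∈ p)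
    (hA2 : ∀ (tv : ℕ) (ht : tv + 2 < nn n₁ n₂ n₃ 0),
      e (⟨⟨0, by omega⟩, ⟨tv + 2, ht⟩⟩ : V n₁ n₂ n₃) ∈ p)
    (hB2 : ∀ (tv : ℕ) (ht : tv + 2 < nn n₁ n₂ n₃ 1),
      e (⟨⟨1, by omega⟩, ⟨tv + 2, ht⟩⟩ : V n₁ n₂ n₃) ∈ p)
    (hC : ∀ t : Fin (nn n₁ n₂ n₃ 2), e (⟨⟨2, by omega⟩, t⟩ : V n₁ n₂ n₃) ∈ p)
    (hIndB : (indB : V n₁ n₂ n₃ → ℤ) ∈ p)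
    (hA1 : e (⟨⟨0, by omega⟩, ⟨1, (by omega : 1 < n₁)⟩⟩ : V n₁ n₂ n₃) ∈ p) :
    ∀ v, e v ∈ p := by
  intro v
  obtain ⟨⟨j, hj⟩, ⟨sv, hs⟩⟩ := v
  match j, hj, sv, hs with
  | 0, hj, 0, hs => exact (eA0_eq (by omega) hs) ▸ hA0
  | 0, hj, 1, hs => exact hA1
  | 0, hj, sv + 2, hs => exact hA2 sv hs
  | 1, hj, sv, hs => exact eBall p h₂ hB0 hB2 hIndB ⟨sv, hs⟩
  | 2, hj, sv, hs => exact hC ⟨sv, hs⟩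

end TP

namespace TP
variable {n₁ n₂ n₃ : ℕ}

theorem spS_top (h₁ : 2 ≤ n₁) (h₂ : 2 ≤ n₂) (h₃ : 2 ≤ n₃) :
    Submodule.span ℤ (Set.range (S n₁ n₂ n₃)) = ⊤ := by
  set p := Submodule.span ℤ (Set.range (S n₁ n₂ n₃)) with hp
  rw [eq_top_iff]
  rintro x -
  have hmem : ∀ v, S n₁ n₂ n₃ v ∈ p := fun v => Submodule.subset_span ⟨v, rfl⟩
  have hA0 : (eA0 : V n₁ n₂ n₃ → ℤ) ∈ p :=
    hmem ⟨⟨0, by omega⟩, ⟨0, (by omega : 0 < n₁)⟩⟩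
  have hB0 : (eB0 : V n₁ n₂ n₃ → ℤ) ∈ p :=
    hmem ⟨⟨1, by omega⟩, ⟨0, (by omega : 0 < n₂)⟩⟩
  have hOne : ((fun _ => 1) : V n₁ n₂ n₃ → ℤ) ∈ p :=
    hmem ⟨⟨0, by omega⟩, ⟨1, (by omega : 1 < n₁)⟩⟩
  have hA2 : ∀ (tv : ℕ) (ht : tv + 2 < nn n₁ n₂ n₃ 0),
      e (⟨⟨0, by omega⟩, ⟨tv + 2, ht⟩⟩ : V n₁ n₂ n₃) ∈ p := by
    intro tv ht
    have h := Submodule.add_mem p (hmem ⟨⟨0, by omega⟩, ⟨tv + 2, ht⟩⟩) hA0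
    rwa [show S n₁ n₂ n₃ ⟨⟨0, by omega⟩, ⟨tv + 2, ht⟩⟩ + eA0
        = e (⟨⟨0, by omega⟩, ⟨tv + 2, ht⟩⟩ : V n₁ n₂ n₃) from sub_add_cancel _ _] at h
  have hB2 : ∀ (tv : ℕ) (ht : tv + 2 < nn n₁ n₂ n₃ 1),
      e (⟨⟨1, by omega⟩, ⟨tv + 2, ht⟩⟩ : V n₁ n₂ n₃) ∈ p := by
    intro tv ht
    have h := Submodule.add_mem p (hmem ⟨⟨1, by omega⟩, ⟨tv + 2, ht⟩⟩) hB0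
    rwa [show S n₁ n₂ n₃ ⟨⟨1, by omega⟩, ⟨tv + 2, ht⟩⟩ + eB0
        = e (⟨⟨1, by omega⟩, ⟨tv + 2, ht⟩⟩ : V n₁ n₂ n₃) from sub_add_cancel _ _] at h
  have hC : ∀ t : Fin (nn n₁ n₂ n₃ 2), e (⟨⟨2, by omega⟩, t⟩ : V n₁ n₂ n₃) ∈ p := by
    intro t
    have h := Submodule.add_mem p (hmem ⟨⟨2, by omega⟩, t⟩) hA0
    rwa [show S n₁ n₂ n₃ ⟨⟨2, by omega⟩, t⟩ + eA0
        = e (⟨⟨2, by omega⟩, t⟩ : V n₁ n₂ n₃) from sub_add_cancel _ _] at h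
  have hIndB : (indB : V n₁ n₂ n₃ → ℤ) ∈ p := by
    have h := Submodule.add_mem p
      (Submodule.sub_mem p (hmem ⟨⟨1, by omega⟩, ⟨1, (by omega : 1 < n₂)⟩⟩)
        (Submodule.smul_mem p ((n₁ : ℤ) + n₃) hA0))
      (Submodule.smul_mem p (n₂ : ℤ) hB0)
    have hb1 : S n₁ n₂ n₃ ⟨⟨1, by omega⟩, ⟨1, (by omega : 1 < n₂)⟩⟩
        = ((n₁:ℤ)+n₃) • eA0 - (n₂:ℤ) • eB0 + indB := rfl
    rw [hb1] at h
    rwa [show ((n₁:ℤ)+n₃) • eA0 - (n₂:ℤ) • eB0 + indB - ((n₁ : ℤ) + n₃) • eA0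
        + (n₂ : ℤ) • eB0 = (indB : V n₁ n₂ n₃ → ℤ) from by abel] at h
  have hA1 : e (⟨⟨0, by omega⟩, ⟨1, (by omega : 1 < n₁)⟩⟩ : V n₁ n₂ n₃) ∈ p := by
    have hBall := eBall p h₂ hB0 hB2 hIndB
    have hRest : (∑ v : V n₁ n₂ n₃,
        if v = (⟨⟨0, by omega⟩, ⟨1, (by omega : 1 < n₁)⟩⟩ : V n₁ n₂ n₃) then 0 else e v) ∈ p := by
      refine Submodule.sum_mem _ fun v _ => ?_
      by_cases h : v = (⟨⟨0, by omega⟩, ⟨1, (by omega : 1 < n₁)⟩⟩ : V n₁ n₂ n₃)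
      · rw [if_pos h]; exact Submodule.zero_mem p
      · rw [if_neg h]
        obtain ⟨⟨j, hj⟩, ⟨sv, hs⟩⟩ := v
        match j, hj, sv, hs with
        | 0, hj, 0, hs => exact (eA0_eq (by omega) hs) ▸ hA0
        | 0, hj, 1, hs => exact absurd rfl h
        | 0, hj, sv + 2, hs => exact hA2 sv hs
        | 1, hj, sv, hs => exact hBall ⟨sv, hs⟩
        | 2, hj, sv, hs => exact hC ⟨sv, hs⟩
    have h := Submodule.sub_mem p hOne hRest
    rwa [ea1_eq ((by omega : 1 < n₁))] at h
  exact mem_of_e p (eAll p h₁ h₂ hA0 hB0 hA2 hB2 hC hIndB hA1) x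

end TP

namespace TP
variable {n₁ n₂ n₃ : ℕ}

theorem spT_top (h₁ : 2 ≤ n₁) (h₂ : 2 ≤ n₂) (h₃ : 2 ≤ n₃) :
    Submodule.span ℤ (Set.range (T n₁ n₂ n₃)) = ⊤ := by
  set p := Submodule.span ℤ (Set.range (T n₁ n₂ n₃)) with hp
  rw [eq_top_iff]
  rintro x -
  have hmem : ∀ v, T n₁ n₂ n₃ v ∈ p := fun v => Submodule.subset_span ⟨v, rfl⟩
  have hB0 : (eB0 : V n₁ n₂ n₃ → ℤ) ∈ p :=
    hmem ⟨⟨0, by omega⟩, ⟨1, (by omega : 1 < n₁)⟩⟩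
  have hA0 : (eA0 : V n₁ n₂ n₃ → ℤ) ∈ p := by
    have h := Submodule.add_mem p (hmem ⟨⟨1, by omega⟩, ⟨1, (by omega : 1 < n₂)⟩⟩) hB0
    rwa [show T n₁ n₂ n₃ ⟨⟨1, by omega⟩, ⟨1, (by omega : 1 < n₂)⟩⟩ + eB0
        = (eA0 : V n₁ n₂ n₃ → ℤ) from sub_add_cancel _ _] at h
  have hA2 : ∀ (tv : ℕ) (ht : tv + 2 < nn n₁ n₂ n₃ 0),
      e (⟨⟨0, by omega⟩, ⟨tv + 2, ht⟩⟩ : V n₁ n₂ n₃) ∈ p := by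
    intro tv ht
    have h := Submodule.add_mem p (hmem ⟨⟨0, by omega⟩, ⟨tv + 2, ht⟩⟩) hA0
    rwa [show T n₁ n₂ n₃ ⟨⟨0, by omega⟩, ⟨tv + 2, ht⟩⟩ + eA0
        = e (⟨⟨0, by omega⟩, ⟨tv + 2, ht⟩⟩ : V n₁ n₂ n₃) from sub_add_cancel _ _] at h
  have hB2 : ∀ (tv : ℕ) (ht : tv + 2 < nn n₁ n₂ n₃ 1),
      e (⟨⟨1, by omega⟩, ⟨tv + 2, ht⟩⟩ : V n₁ n₂ n₃) ∈ p := by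
    intro tv ht
    have h := Submodule.add_mem p (hmem ⟨⟨1, by omega⟩, ⟨tv + 2, ht⟩⟩) hB0
    rwa [show T n₁ n₂ n₃ ⟨⟨1, by omega⟩, ⟨tv + 2, ht⟩⟩ + eB0
        = e (⟨⟨1, by omega⟩, ⟨tv + 2, ht⟩⟩ : V n₁ n₂ n₃) from sub_add_cancel _ _] at h
  have hC : ∀ t : Fin (nn n₁ n₂ n₃ 2), e (⟨⟨2, by omega⟩, t⟩ : V n₁ n₂ n₃) ∈ p := by
    intro t
    have h := Submodule.add_mem p (hmem ⟨⟨2, by omega⟩, t⟩) hA0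
    rwa [show T n₁ n₂ n₃ ⟨⟨2, by omega⟩, t⟩ + eA0
        = e (⟨⟨2, by omega⟩, t⟩ : V n₁ n₂ n₃) from sub_add_cancel _ _] at h
  have hIndB : (indB : V n₁ n₂ n₃ → ℤ) ∈ p := by
    have h := Submodule.sub_mem p (Submodule.smul_mem p (n₂ : ℤ) hA0)
      (hmem ⟨⟨0, by omega⟩, ⟨0, (by omega : 0 < n₁)⟩⟩)
    have ha0 : T n₁ n₂ n₃ ⟨⟨0, by omega⟩, ⟨0, (by omega : 0 < n₁)⟩⟩
        = (n₂:ℤ) • eA0 - indB := rfl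
    rw [ha0] at h
    rwa [show (n₂ : ℤ) • eA0 - ((n₂:ℤ) • eA0 - indB) = (indB : V n₁ n₂ n₃ → ℤ) from by abel] at h
  have hIndAC : (indAC : V n₁ n₂ n₃ → ℤ) ∈ p := by
    have h := Submodule.sub_mem p (Submodule.smul_mem p ((n₁ : ℤ) + n₃) hB0)
      (hmem ⟨⟨1, by omega⟩, ⟨0, (by omega : 0 < n₂)⟩⟩)
    have hb0 : T n₁ n₂ n₃ ⟨⟨1, by omega⟩, ⟨0, (by omega : 0 < n₂)⟩⟩
        = ((n₁:ℤ)+n₃) • eB0 - indAC := rfl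
    rw [hb0] at h
    rwa [show ((n₁:ℤ)+n₃) • eB0 - (((n₁:ℤ)+n₃) • eB0 - indAC)
        = (indAC : V n₁ n₂ n₃ → ℤ) from by abel] at h
  have hA1 : e (⟨⟨0, by omega⟩, ⟨1, (by omega : 1 < n₁)⟩⟩ : V n₁ n₂ n₃) ∈ p := by
    have hsumA : (∑ t : Fin n₁, if t.val = 1 then (0 : V n₁ n₂ n₃ → ℤ)
        else e (vA n₁ n₂ n₃ t)) ∈ p := by
      refine Submodule.sum_mem _ fun t _ => ?_
      obtain ⟨sv, hsv⟩ := t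
      match sv, hsv with
      | 0, hsv => simpa using (eA0_eq (by omega) hsv) ▸ hA0
      | 1, hsv => simp
      | sv + 2, hsv => rw [if_neg (by simp)]; exact hA2 sv hsv
    have hsumC : (∑ t : Fin n₃, e (vC n₁ n₂ n₃ t)) ∈ p :=
      Submodule.sum_mem _ fun t _ => hC t
    have h := Submodule.sub_mem p (Submodule.sub_mem p hIndAC hsumA) hsumC
    rwa [ea1_eq' ((by omega : 1 < n₁))] at h
  exact mem_of_e p (eAll p h₁ h₂ hA0 hB0 hA2 hB2 hC hIndB hA1) x

end TP

namespace TP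
variable {n₁ n₂ n₃ : ℕ}

lemma e_single (v : V n₁ n₂ n₃) : e v = Pi.single v (1:ℤ) := by
  funext w
  rw [Pi.single_apply]
  rfl

variable (n₁ n₂ n₃) in
def MT : Matrix (V n₁ n₂ n₃) (V n₁ n₂ n₃) ℤ := Matrix.of fun w v => T n₁ n₂ n₃ v w

lemma MT_mulVec_e (v : V n₁ n₂ n₃) : (MT n₁ n₂ n₃).mulVec (e v) = T n₁ n₂ n₃ v := by
  funext w
  simp only [Matrix.mulVec, dotProduct, MT, Matrix.of_apply, e, mul_ite, mul_one, mul_zero]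
  rw [Finset.sum_ite_eq' Finset.univ v (fun u => T n₁ n₂ n₃ u w)]
  simp

lemma range_eq_span (L : Matrix (V n₁ n₂ n₃) (V n₁ n₂ n₃) ℤ) :
    LinearMap.range L.mulVecLin
      = Submodule.span ℤ (Set.range (fun v => L.mulVec (e v))) := by
  have htop : Submodule.span ℤ (Set.range (e : V n₁ n₂ n₃ → _)) = ⊤ := by
    rw [eq_top_iff]
    rintro x -
    exact mem_of_e _ (fun v => Submodule.subset_span (Set.mem_range_self v)) x
  rw [LinearMap.range_eq_map, ← htop, Submodule.map_span, ← Set.range_comp]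
  rfl

theorem range_MT (h₁ : 2 ≤ n₁) (h₂ : 2 ≤ n₂) (h₃ : 2 ≤ n₃) :
    LinearMap.range (MT n₁ n₂ n₃).mulVecLin = ⊤ := by
  rw [range_eq_span]
  rw [show (fun v => (MT n₁ n₂ n₃).mulVec (e v)) = T n₁ n₂ n₃ from funext MT_mulVec_e]
  exact spT_top h₁ h₂ h₃

noncomputable def Phi (h₁ : 2 ≤ n₁) (h₂ : 2 ≤ n₂) (h₃ : 2 ≤ n₃) :
    (V n₁ n₂ n₃ → ℤ) ≃ₗ[ℤ] (V n₁ n₂ n₃ → ℤ) :=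
  LinearEquiv.ofBijective (MT n₁ n₂ n₃).mulVecLin
    ⟨OrzechProperty.injective_of_surjective_endomorphism _
      (LinearMap.range_eq_top.mp (range_MT h₁ h₂ h₃)),
     LinearMap.range_eq_top.mp (range_MT h₁ h₂ h₃)⟩

theorem range_lap (h₁ : 2 ≤ n₁) (h₂ : 2 ≤ n₂) (h₃ : 2 ≤ n₃) :
    LinearMap.range ((G n₁ n₂ n₃).lapMatrix ℤ).mulVecLin
      = Submodule.span ℤ (Set.range (fun v => ((dn n₁ n₂ n₃ v : ℤ) • T n₁ n₂ n₃ v))) := by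
  rw [LinearMap.range_eq_map, ← spS_top h₁ h₂ h₃, Submodule.map_span, ← Set.range_comp]
  congr 1
  apply congrArg
  funext v
  exact key h₁ h₂ h₃ v

variable (n₁ n₂ n₃) in
def P1 : Submodule ℤ (V n₁ n₂ n₃ → ℤ) :=
  Submodule.span ℤ (Set.range (fun v => ((dn n₁ n₂ n₃ v : ℤ) • e v)))

theorem map_Phi_P1 (h₁ : 2 ≤ n₁) (h₂ : 2 ≤ n₂) (h₃ : 2 ≤ n₃) :
    (P1 n₁ n₂ n₃).map (Phi h₁ h₂ h₃ : (V n₁ n₂ n₃ → ℤ) →ₗ[ℤ] (V n₁ n₂ n₃ → ℤ)) = LinearMap.range ((G n₁ n₂ n₃).lapMatrix ℤ).mulVecLin := by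
  rw [range_lap h₁ h₂ h₃, P1, Submodule.map_span, ← Set.range_comp]
  congr 1
  apply congrArg
  funext v
  show (MT n₁ n₂ n₃).mulVecLin ((dn n₁ n₂ n₃ v : ℤ) • e v) = _
  rw [_root_.map_smul]
  congr 1
  exact MT_mulVec_e v

theorem P1_eq :
    P1 n₁ n₂ n₃ = Submodule.pi Set.univ (fun v => Ideal.span {((dn n₁ n₂ n₃ v : ℕ) : ℤ)}) := by
  apply le_antisymm
  · rw [P1, Submodule.span_le]
    rintro _ ⟨v, rfl⟩
    intro w _
    simp only [Pi.smul_apply, smul_eq_mul, e]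
    by_cases h : w = v
    · subst h
      rw [if_pos rfl]
      exact Ideal.mem_span_singleton.mpr ⟨1, by ring⟩
    · rw [if_neg h]
      simp
  · intro x hx
    have hdvd : ∀ w, ((dn n₁ n₂ n₃ w : ℕ) : ℤ) ∣ x w := fun w =>
      Ideal.mem_span_singleton.mp (hx w (Set.mem_univ w))
    choose c hc using hdvd
    have hx2 : x = ∑ v : V n₁ n₂ n₃, c v • ((dn n₁ n₂ n₃ v : ℤ) • e v) := by
      funext w
      rw [Finset.sum_apply]
      simp only [Pi.smul_apply, smul_eq_mul, e, mul_ite, mul_one, mul_zero]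
      rw [Finset.sum_ite_eq Finset.univ w (fun v => c v * (dn n₁ n₂ n₃ v : ℤ))]
      simp only [Finset.mem_univ, if_true]
      rw [hc w]
      ring
    rw [hx2]
    exact Submodule.sum_mem _ fun v _ => Submodule.smul_mem _ _
      (Submodule.subset_span ⟨v, rfl⟩)

end TP

namespace TP
variable {n₁ n₂ n₃ : ℕ}

noncomputable def cokerEquivPi (h₁ : 2 ≤ n₁) (h₂ : 2 ≤ n₂) (h₃ : 2 ≤ n₃) :
    ((V n₁ n₂ n₃ → ℤ) ⧸ LinearMap.range ((G n₁ n₂ n₃).lapMatrix ℤ).mulVecLin)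
      ≃+ ∀ v : V n₁ n₂ n₃, ZMod (dn n₁ n₂ n₃ v) :=
  (((Submodule.Quotient.equiv (P1 n₁ n₂ n₃)
      (LinearMap.range ((G n₁ n₂ n₃).lapMatrix ℤ).mulVecLin) (Phi h₁ h₂ h₃)
      (map_Phi_P1 h₁ h₂ h₃)).symm.trans
    ((Submodule.quotEquivOfEq _ _ P1_eq).trans
      (Submodule.quotientPi _))).toAddEquiv).trans
  (AddEquiv.piCongrRight (fun v => (Int.quotientSpanNatEquivZMod (dn n₁ n₂ n₃ v)).toAddEquiv))

def Fmap (h₁ : 2 ≤ n₁) (h₂ : 2 ≤ n₂) (h₃ : 2 ≤ n₃) :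
    (∀ v : V n₁ n₂ n₃, ZMod (dn n₁ n₂ n₃ v)) →
      ℤ × (Fin (n₁ + n₃ - 2) → ZMod n₂) × (Fin (n₂ - 2) → ZMod (n₁ + n₃)) ×
        ZMod (n₂ * (n₁ + n₃)) :=
  fun f =>
    (f ⟨⟨0, by omega⟩, ⟨1, (by omega : 1 < n₁)⟩⟩,
     fun t => if h : t.val < n₁ - 2
       then f ⟨⟨0, by omega⟩, ⟨t.val + 2, (by omega : t.val + 2 < n₁)⟩⟩
       else f ⟨⟨2, by omega⟩, ⟨t.val - (n₁ - 2), (by omega : t.val - (n₁ - 2) < n₃)⟩⟩,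
     fun t => f ⟨⟨1, by omega⟩, ⟨t.val + 2, (by omega : t.val + 2 < n₂)⟩⟩,
     f ⟨⟨1, by omega⟩, ⟨1, (by omega : 1 < n₂)⟩⟩)

def Gmap (h₁ : 2 ≤ n₁) (h₂ : 2 ≤ n₂) (h₃ : 2 ≤ n₃) :
    (ℤ × (Fin (n₁ + n₃ - 2) → ZMod n₂) × (Fin (n₂ - 2) → ZMod (n₁ + n₃)) ×
        ZMod (n₂ * (n₁ + n₃))) → ∀ v : V n₁ n₂ n₃, ZMod (dn n₁ n₂ n₃ v) :=
  fun x v => match v with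
    | ⟨⟨0, _⟩, ⟨0, _⟩⟩ => 0
    | ⟨⟨0, _⟩, ⟨1, _⟩⟩ => x.1
    | ⟨⟨0, _⟩, ⟨tv+2, ht⟩⟩ => x.2.1 ⟨tv, by have ht' : tv + 2 < n₁ := ht; omega⟩
    | ⟨⟨1, _⟩, ⟨0, _⟩⟩ => 0
    | ⟨⟨1, _⟩, ⟨1, _⟩⟩ => x.2.2.2
    | ⟨⟨1, _⟩, ⟨tv+2, ht⟩⟩ => x.2.2.1 ⟨tv, by have ht' : tv + 2 < n₂ := ht; omega⟩
    | ⟨⟨2, _⟩, ⟨tv, ht⟩⟩ => x.2.1 ⟨n₁ - 2 + tv, by have ht' : tv < n₃ := ht; omega⟩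
    | ⟨⟨_+3, hi⟩, _⟩ => absurd hi (by omega)

def finalEquiv (h₁ : 2 ≤ n₁) (h₂ : 2 ≤ n₂) (h₃ : 2 ≤ n₃) :
    (∀ v : V n₁ n₂ n₃, ZMod (dn n₁ n₂ n₃ v)) ≃+
      ℤ × (Fin (n₁ + n₃ - 2) → ZMod n₂) × (Fin (n₂ - 2) → ZMod (n₁ + n₃)) ×
        ZMod (n₂ * (n₁ + n₃)) where
  toFun := Fmap h₁ h₂ h₃
  invFun := Gmap h₁ h₂ h₃
  left_inv := by
    intro f
    funext v
    obtain ⟨⟨j, hj⟩, ⟨sv, hs⟩⟩ := v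
    match j, hj, sv, hs with
    | 0, hj, 0, hs => exact Subsingleton.elim (α := ZMod 1) _ _
    | 0, hj, 1, hs => rfl
    | 0, hj, sv + 2, hs =>
      have hs' : sv + 2 < n₁ := hs
      simp only [Gmap, Fmap]
      exact dif_pos (show sv < n₁ - 2 by omega)
    | 1, hj, 0, hs => exact Subsingleton.elim (α := ZMod 1) _ _
    | 1, hj, 1, hs => rfl
    | 1, hj, sv + 2, hs => rfl
    | 2, hj, sv, hs =>
      have hs' : sv < n₃ := hs
      simp only [Gmap, Fmap]
      refine (dif_neg (show ¬ (n₁ - 2 + sv < n₁ - 2) by omega)).trans ?_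
      congr 1
      refine (mk_eq_mk _ _ _ _).mpr ⟨rfl, ?_⟩
      show n₁ - 2 + sv - (n₁ - 2) = sv
      omega
  right_inv := by
    intro x
    obtain ⟨z, g, hh, w⟩ := x
    refine Prod.ext rfl (Prod.ext ?_ (Prod.ext ?_ rfl))
    · funext t
      simp only [Fmap, Gmap]
      by_cases h : t.val < n₁ - 2
      · rw [dif_pos h]
      · rw [dif_neg h]
        exact congrArg g (Fin.ext
          (show n₁ - 2 + (t.val - (n₁ - 2)) = t.val by have := t.isLt; omega))
    · funext t
      exact congrArg hh (Fin.ext rfl)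
  map_add' := by
    intro f g
    refine Prod.ext rfl (Prod.ext ?_ (Prod.ext rfl rfl))
    funext t
    by_cases h : t.val < n₁ - 2 <;>
      simp [Fmap, Prod.fst_add, Prod.snd_add, Pi.add_apply, h] <;> rfl

end TP

/-- The cokernel of the Laplacian of the 3-partite graph `G_{n₁,n₂,n₃}` is
`ℤ ⊕ (ℤ/n₂ℤ)^{n₁+n₃-2} ⊕ (ℤ/(n₁+n₃)ℤ)^{n₂-2} ⊕ ℤ/(n₂(n₁+n₃))ℤ`. -/
theorem critical_group_threePartite (n₁ n₂ n₃ : ℕ) (h₁ : 2 ≤ n₁) (h₂ : 2 ≤ n₂) (h₃ : 2 ≤ n₃) :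
    Nonempty (
      (((kpartiteGraph 3 (fun i => [n₁, n₂, n₃].getD i 0)).lapMatrix ℤ).cokernel)
        ≃+
      (ℤ × (Fin (n₁ + n₃ - 2) → ZMod n₂) × (Fin (n₂ - 2) → ZMod (n₁ + n₃)) ×
        ZMod (n₂ * (n₁ + n₃)))) := by
  have hnn : (fun i => [n₁, n₂, n₃].getD i 0) = TP.nn n₁ n₂ n₃ := by
    funext i; rcases i with _ | _ | _ | i <;> rfl
  have key : ∀ f : ℕ → ℕ, f = TP.nn n₁ n₂ n₃ → Nonempty (
      (((kpartiteGraph 3 f).lapMatrix ℤ).cokernel) ≃+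
      (ℤ × (Fin (n₁ + n₃ - 2) → ZMod n₂) × (Fin (n₂ - 2) → ZMod (n₁ + n₃)) ×
        ZMod (n₂ * (n₁ + n₃)))) := by
    rintro f rfl
    exact ⟨(TP.cokerEquivPi h₁ h₂ h₃).trans (TP.finalEquiv h₁ h₂ h₃)⟩
  exact key _ hnn
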